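/- The space C(ℝ^d, ≤ n) of possibly non-proper convex n-partitions of ℝ^d, equipped with the metric d_μ(P,P′) = Σᵢ μ(Pᵢ △ P′ᵢ) for μ the pushforward of spherical measure under the hemisphere embedding, is a compact metric space, being the continuous image of a closed (hence compact) subset of (S^d)^{binom(n,2)}. -/

import Mathlib

open MeasureTheory Filter
open scoped RealInnerProductSpace

/-- A possibly non-proper convex `n`-partition of `ℝ^d`: open convex pairwise disjoint
(possibly empty) regions whose closures cover `ℝ^d`. -/
def IsConvexPartitionLE {d n : ℕ} (P : Fin n → Set (EuclideanSpace ℝ (Fin d))) : Prop :=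
  (∀ i, IsOpen (P i)) ∧ (∀ i, Convex ℝ (P i)) ∧
    Pairwise (Function.onFun Disjoint P) ∧ (⋃ i, closure (P i)) = Set.univ

open Set
open scoped Topology

noncomputable section PartitionAux
attribute [local instance] Classical.propDecidable

variable {d : ℕ}

abbrev Euc (d : ℕ) := EuclideanSpace ℝ (Fin d)

/-- Affine functional attached to a pair `(b, a)`: `x ↦ b + ⟪a, x⟫`. -/
def fval (p : ℝ × Euc d) (x : Euc d) : ℝ := p.1 + ⟪p.2, x⟫

lemma fval_neg (p : ℝ × Euc d) (x : Euc d) : fval (-p) x = -fval p x := by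
  simp [fval, inner_neg_left]; ring

lemma fval_smul (r : ℝ) (p : ℝ × Euc d) (x : Euc d) :
    fval (r • p) x = r * fval p x := by
  simp only [fval, Prod.smul_fst, Prod.smul_snd, real_inner_smul_left, smul_eq_mul]; ring

lemma continuous_fval_x (p : ℝ × Euc d) : Continuous (fval p) :=
  continuous_const.add (continuous_const.inner continuous_id)

lemma continuous_fval_p (x : Euc d) : Continuous (fun p : ℝ × Euc d => fval p x) :=
  continuous_fst.add (continuous_snd.inner continuous_const)

lemma isOpen_half (p : ℝ × Euc d) : IsOpen {x : Euc d | fval p x < 0} :=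
  isOpen_lt (continuous_fval_x p) continuous_const

lemma convex_half (p : ℝ × Euc d) : Convex ℝ {x : Euc d | fval p x < 0} := by
  have h : IsLinearMap ℝ (fun x : Euc d => ⟪p.2, x⟫) :=
    ⟨fun a b => inner_add_right _ _ _, fun r a => real_inner_smul_right _ _ _⟩
  have : {x : Euc d | fval p x < 0} = {x : Euc d | (fun x => ⟪p.2, x⟫) x < -p.1} := by
    ext x; simp [fval]; constructor <;> intro h <;> linarith
  rw [this]
  exact convex_halfSpace_lt h _

lemma measurableSet_half (p : ℝ × Euc d) : MeasurableSet {x : Euc d | fval p x < 0} :=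
  (isOpen_half p).measurableSet

/-- The candidate partition piece cut out by the matrix of affine functionals `c`. -/
def piMap {n : ℕ} (c : Fin n → Fin n → ℝ × Euc d) (i : Fin n) : Set (Euc d) :=
  {x | ∀ j, j ≠ i → fval (c i j) x < 0}

lemma piMap_eq_iInter {n : ℕ} (c : Fin n → Fin n → ℝ × Euc d) (i : Fin n) :
    piMap c i = ⋂ j, {x | j ≠ i → fval (c i j) x < 0} := by
  ext x; simp [piMap]

lemma isOpen_piMap {n : ℕ} (c : Fin n → Fin n → ℝ × Euc d) (i : Fin n) :
    IsOpen (piMap c i) := by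
  rw [piMap_eq_iInter]
  refine isOpen_iInter_of_finite fun j => ?_
  by_cases h : j = i
  · simp [h]
  · have : {x : Euc d | j ≠ i → fval (c i j) x < 0} = {x : Euc d | fval (c i j) x < 0} := by
      ext x; simp [h]
    rw [this]; exact isOpen_half _

lemma convex_piMap {n : ℕ} (c : Fin n → Fin n → ℝ × Euc d) (i : Fin n) :
    Convex ℝ (piMap c i) := by
  rw [piMap_eq_iInter]
  refine convex_iInter fun j => ?_
  by_cases h : j = i
  · simp [h]; exact convex_univ
  · have : {x : Euc d | j ≠ i → fval (c i j) x < 0} = {x : Euc d | fval (c i j) x < 0} := by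
      ext x; simp [h]
    rw [this]; exact convex_half _

lemma measurableSet_piMap {n : ℕ} (c : Fin n → Fin n → ℝ × Euc d) (i : Fin n) :
    MeasurableSet (piMap c i) := (isOpen_piMap c i).measurableSet

lemma closure_piMap_subset {n : ℕ} (c : Fin n → Fin n → ℝ × Euc d) (i : Fin n) :
    closure (piMap c i) ⊆ {x | ∀ j, j ≠ i → fval (c i j) x ≤ 0} := by
  refine closure_minimal (fun x hx j hj => (hx j hj).le) ?_
  have : {x : Euc d | ∀ j, j ≠ i → fval (c i j) x ≤ 0}
      = ⋂ j, {x | j ≠ i → fval (c i j) x ≤ 0} := by ext x; simp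
  rw [this]
  refine isClosed_iInter fun j => ?_
  by_cases h : j = i
  · simp [h]
  · have : {x : Euc d | j ≠ i → fval (c i j) x ≤ 0} = {x : Euc d | fval (c i j) x ≤ 0} := by
      ext x; simp [h]
    rw [this]
    exact isClosed_le (continuous_fval_x _) continuous_const

lemma frontier_piMap_subset {n : ℕ} (c : Fin n → Fin n → ℝ × Euc d) (i : Fin n) :
    frontier (piMap c i) ⊆ ⋃ j, {x | j ≠ i ∧ fval (c i j) x = 0} := by
  intro x hx
  rw [frontier, (isOpen_piMap c i).interior_eq] at hx
  obtain ⟨hx1, hx2⟩ := hx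
  have h1 := closure_piMap_subset c i hx1
  simp only [piMap, mem_setOf_eq, not_forall] at hx2
  obtain ⟨j, hj, hge⟩ := hx2
  exact mem_iUnion.2 ⟨j, hj, le_antisymm (h1 j hj) (not_lt.1 hge)⟩

/-- Hahn–Banach separation for two nonempty disjoint open convex sets, normalized. -/
lemma exists_sep {s t : Set (Euc d)} (hs : Convex ℝ s) (hso : IsOpen s)
    (ht : Convex ℝ t) (hto : IsOpen t) (hd : Disjoint s t)
    (hsne : s.Nonempty) (htne : t.Nonempty) :
    ∃ p : ℝ × Euc d, ‖p‖ = 1 ∧ (∀ x ∈ s, fval p x < 0) ∧ ∀ x ∈ t, 0 < fval p x := by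
  obtain ⟨f, u, hfs, hft⟩ := geometric_hahn_banach_open_open hs hso ht hto hd
  set v : Euc d := (InnerProductSpace.toDual ℝ (Euc d)).symm f with hv
  have hvx : ∀ x : Euc d, ⟪v, x⟫ = f x := fun x => InnerProductSpace.toDual_symm_apply
  obtain ⟨a, ha⟩ := hsne
  obtain ⟨b, hb⟩ := htne
  have hvne : v ≠ 0 := by
    intro h0
    have h1 : f a < u := hfs a ha
    have h2 : u < f b := hft b hb
    rw [← hvx a, ← hvx b, h0] at *
    simp at h1 h2
    linarith
  set p₀ : ℝ × Euc d := (-u, v) with hp₀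
  have hnorm : 0 < ‖p₀‖ := by
    have : ‖v‖ ≤ ‖p₀‖ := by rw [Prod.norm_def]; exact le_max_right _ _
    have hv0 : 0 < ‖v‖ := norm_pos_iff.2 hvne
    linarith
  refine ⟨‖p₀‖⁻¹ • p₀, ?_, ?_, ?_⟩
  · rw [norm_smul]
    simp [abs_of_pos (inv_pos.2 hnorm), inv_mul_cancel₀ hnorm.ne']
  · intro x hx
    rw [fval_smul]
    have : fval p₀ x < 0 := by
      have := hfs x hx
      simp only [fval, hp₀]
      have := hvx x
      linarith
    exact mul_neg_of_pos_of_neg (inv_pos.2 hnorm) this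
  · intro x hx
    rw [fval_smul]
    have : 0 < fval p₀ x := by
      have := hft x hx
      simp only [fval, hp₀]
      have := hvx x
      linarith
    exact mul_pos (inv_pos.2 hnorm) this

/-- Choice of a normalized separating functional (with a default value). -/
def sepPair (s t : Set (Euc d)) : ℝ × Euc d :=
  if h : ∃ p : ℝ × Euc d, ‖p‖ = 1 ∧ (∀ x ∈ s, fval p x < 0) ∧ ∀ x ∈ t, 0 < fval p x
  then h.choose else (1, 0)

lemma norm_sepPair (s t : Set (Euc d)) : ‖sepPair s t‖ = 1 := by
  rw [sepPair]
  split_ifs with h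
  · exact h.choose_spec.1
  · rw [Prod.norm_def]; simp

lemma sepPair_spec {s t : Set (Euc d)} (hs : Convex ℝ s) (hso : IsOpen s)
    (ht : Convex ℝ t) (hto : IsOpen t) (hd : Disjoint s t)
    (hsne : s.Nonempty) (htne : t.Nonempty) :
    (∀ x ∈ s, fval (sepPair s t) x < 0) ∧ ∀ x ∈ t, 0 < fval (sepPair s t) x := by
  have h := exists_sep hs hso ht hto hd hsne htne
  rw [sepPair, dif_pos h]
  exact ⟨h.choose_spec.2.1, h.choose_spec.2.2⟩

/-- Matrix of normalized separating functionals attached to a family of sets. -/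
def cmat {n : ℕ} (P : Fin n → Set (Euc d)) (i j : Fin n) : ℝ × Euc d :=
  if P i = ∅ then
    (if P j = ∅ then (if i ≤ j then ((1 : ℝ), (0 : Euc d)) else (-1, 0)) else (1, 0))
  else if P j = ∅ then (-1, 0)
  else if i < j then sepPair (P i) (P j) else -(sepPair (P j) (P i))

lemma norm_one_aux : ‖((1 : ℝ), (0 : Euc d))‖ = 1 := by rw [Prod.norm_def]; simp

lemma norm_neg_one_aux : ‖((-1 : ℝ), (0 : Euc d))‖ = 1 := by rw [Prod.norm_def]; simp

lemma norm_cmat {n : ℕ} (P : Fin n → Set (Euc d)) (i j : Fin n) : ‖cmat P i j‖ = 1 := by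
  rw [cmat]
  split_ifs <;>
    simp [norm_one_aux, norm_neg_one_aux, norm_sepPair, norm_neg]

lemma neg_pair_aux : -(((1:ℝ), (0 : Euc d))) = ((-1 : ℝ), (0 : Euc d)) := by
  simp [Prod.ext_iff]

lemma cmat_antisymm {n : ℕ} (P : Fin n → Set (Euc d)) {i j : Fin n} (hij : i ≠ j) :
    cmat P j i = -(cmat P i j) := by
  by_cases hi : P i = ∅ <;> by_cases hj : P j = ∅
  · rcases lt_or_gt_of_ne hij with h | h
    · simp [cmat, hi, hj, h.le, not_le.2 h, Prod.ext_iff]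
    · simp [cmat, hi, hj, h.le, not_le.2 h, Prod.ext_iff]
  · simp [cmat, hi, hj, Prod.ext_iff]
  · simp [cmat, hi, hj, Prod.ext_iff]
  · rcases lt_or_gt_of_ne hij with h | h
    · simp [cmat, hi, hj, h, not_lt.2 h.le, Prod.ext_iff]
    · simp [cmat, hi, hj, h, not_lt.2 h.le, Prod.ext_iff]

lemma cmat_lt {n : ℕ} {P : Fin n → Set (Euc d)} (hP : IsConvexPartitionLE P)
    {i j : Fin n} (hij : i ≠ j) : ∀ x ∈ P i, fval (cmat P i j) x < 0 := by
  intro x hx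
  have hi : P i ≠ ∅ := fun h => by simp [h] at hx
  by_cases hj : P j = ∅
  · simp [cmat, hi, hj, fval]
  · have hdisj : Disjoint (P i) (P j) := hP.2.2.1 hij
    rcases lt_or_gt_of_ne hij with h | h
    · rw [cmat, if_neg hi, if_neg hj, if_pos h]
      exact (sepPair_spec (hP.2.1 i) (hP.1 i) (hP.2.1 j) (hP.1 j) hdisj
        (Set.nonempty_iff_ne_empty.2 hi) (Set.nonempty_iff_ne_empty.2 hj)).1 x hx
    · rw [cmat, if_neg hi, if_neg hj, if_neg (not_lt.2 h.le)]
      rw [fval_neg, neg_lt, neg_zero]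
      exact (sepPair_spec (hP.2.1 j) (hP.1 j) (hP.2.1 i) (hP.1 i) hdisj.symm
        (Set.nonempty_iff_ne_empty.2 hj) (Set.nonempty_iff_ne_empty.2 hi)).2 x hx

/-- An open convex nonempty set equals the interior of its closure. -/
lemma interior_closure_subset {s : Set (Euc d)} (hc : Convex ℝ s) (ho : IsOpen s)
    (hne : s.Nonempty) : interior (closure s) ⊆ s := by
  obtain ⟨y, hy⟩ := hne
  intro x hx
  -- find ε > 0 with x + ε • (x - y) ∈ closure s
  have hcont : Continuous fun ε : ℝ => x + ε • (x - y) := by continuity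
  have h0 : (fun ε : ℝ => x + ε • (x - y)) 0 ∈ interior (closure s) := by simpa using hx
  have hopen : IsOpen ((fun ε : ℝ => x + ε • (x - y)) ⁻¹' interior (closure s)) :=
    isOpen_interior.preimage hcont
  have h0mem : (0 : ℝ) ∈ (fun ε : ℝ => x + ε • (x - y)) ⁻¹' interior (closure s) := h0
  obtain ⟨δ, hδpos, hδ⟩ := Metric.isOpen_iff.1 hopen 0 h0mem
  set ε : ℝ := δ / 2 with hε
  have hεpos : 0 < ε := by positivity
  have hεδ : ε ∈ Metric.ball (0 : ℝ) δ := by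
    have hd : dist ε 0 = ε := by rw [Real.dist_eq, sub_zero, abs_of_pos hεpos]
    rw [Metric.mem_ball, hd, hε]
    linarith
  have hz : x + ε • (x - y) ∈ closure s := interior_subset (hδ hεδ)
  -- now x is a strict convex combination of z ∈ closure s and y ∈ interior s
  set z : Euc d := x + ε • (x - y) with hzdef
  have hyint : y ∈ interior s := by rwa [ho.interior_eq]
  have ht : ε / (1 + ε) ∈ Set.Ioc (0 : ℝ) 1 := by
    constructor
    · positivity
    · rw [div_le_one (by linarith)]; linarith
  have key := hc.add_smul_sub_mem_interior' hz hyint ht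
  have hxeq : z + (ε / (1 + ε)) • (y - z) = x := by
    rw [hzdef]
    have h1 : (1 : ℝ) + ε ≠ 0 := by linarith
    match_scalars <;> field_simp <;> ring
  rw [hxeq, ho.interior_eq] at key
  exact key

section PartitionLemmas

variable {n : ℕ} {P : Fin n → Set (Euc d)}

lemma subset_piMap (hP : IsConvexPartitionLE P) (i : Fin n) :
    P i ⊆ piMap (cmat P) i :=
  fun x hx j hj => cmat_lt hP hj.symm x hx

lemma piMap_disjoint_closure (hP : IsConvexPartitionLE P) {i j : Fin n} (hij : j ≠ i) :
    piMap (cmat P) i ∩ closure (P j) = ∅ := by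
  have hPj : P j ⊆ {x | 0 ≤ fval (cmat P i j) x} := by
    intro x hx
    have h1 := cmat_lt hP hij x hx
    simp only [Set.mem_setOf_eq, cmat_antisymm P hij, fval_neg]
    linarith
  have hcl : closure (P j) ⊆ {x | 0 ≤ fval (cmat P i j) x} :=
    closure_minimal hPj (isClosed_le continuous_const (continuous_fval_x _))
  ext x
  simp only [Set.mem_inter_iff, Set.mem_empty_iff_false, iff_false, not_and]
  intro hx hxc
  exact absurd (hx j hij.symm.symm) (not_lt.2 (hcl hxc))

lemma piMap_subset_closure (hP : IsConvexPartitionLE P) (i : Fin n) :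
    piMap (cmat P) i ⊆ closure (P i) := by
  intro x hx
  have hcover : x ∈ ⋃ j, closure (P j) := hP.2.2.2 ▸ Set.mem_univ x
  obtain ⟨j, hj⟩ := Set.mem_iUnion.1 hcover
  by_cases h : j = i
  · rwa [← h]
  · exfalso
    have := piMap_disjoint_closure hP (show j ≠ i from h)
    exact absurd (Set.mem_inter hx hj) (by rw [this]; exact Set.notMem_empty x)

lemma piMap_eq (hP : IsConvexPartitionLE P) (i : Fin n) :
    piMap (cmat P) i = P i := by
  rcases Set.eq_empty_or_nonempty (P i) with h | h
  · have := piMap_subset_closure hP i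
    rw [h, closure_empty] at this
    exact Set.eq_empty_iff_forall_notMem.2 (fun x hx => this hx) ▸ h ▸ rfl
  · refine Set.Subset.antisymm ?_ (subset_piMap hP i)
    have h1 : piMap (cmat P) i ⊆ interior (closure (P i)) :=
      interior_maximal (piMap_subset_closure hP i) (isOpen_piMap _ i)
    exact h1.trans (interior_closure_subset (hP.2.1 i) (hP.1 i) h)

end PartitionLemmas

section MeasureLemmas

variable {n : ℕ} {μ : Measure (Euc d)}

lemma null_zero_set
    (hplane : ∀ (a : Euc d) (b : ℝ), a ≠ 0 → μ {x | ⟪a, x⟫ = b} = 0)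
    {p : ℝ × Euc d} (hp : ‖p‖ = 1) : μ {x | fval p x = 0} = 0 := by
  by_cases h2 : p.2 = 0
  · have hb : p.1 ≠ 0 := by
      intro h1
      rw [Prod.norm_def, h1, h2] at hp
      simp at hp
    have : {x : Euc d | fval p x = 0} = ∅ := by
      ext x
      simp [fval, h2, hb]
    rw [this, measure_empty]
  · have : {x : Euc d | fval p x = 0} = {x : Euc d | ⟪p.2, x⟫ = -p.1} := by
      ext x
      simp only [fval, Set.mem_setOf_eq]
      constructor <;> intro h <;> linarith
    rw [this]
    exact hplane p.2 (-p.1) h2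

lemma null_frontier
    (hplane : ∀ (a : Euc d) (b : ℝ), a ≠ 0 → μ {x | ⟪a, x⟫ = b} = 0)
    {c : Fin n → Fin n → ℝ × Euc d} (hc : ∀ i j, ‖c i j‖ = 1) (i : Fin n) :
    μ (frontier (piMap c i)) = 0 := by
  refine measure_mono_null (frontier_piMap_subset c i) ?_
  refine measure_iUnion_null fun j => ?_
  refine measure_mono_null (fun x hx => hx.2) (null_zero_set hplane (hc i j))

lemma sum_measure_eq [IsFiniteMeasure μ] {P : Fin n → Set (Euc d)}
    (hplane : ∀ (a : Euc d) (b : ℝ), a ≠ 0 → μ {x | ⟪a, x⟫ = b} = 0)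
    (hP : IsConvexPartitionLE P) :
    ∑ i, μ (P i) = μ Set.univ := by
  have hmeas : ∀ i, MeasurableSet (P i) := fun i => (hP.1 i).measurableSet
  have hUnion : μ (⋃ i, P i) = ∑ i, μ (P i) := by
    rw [measure_iUnion hP.2.2.1 hmeas, tsum_fintype]
  have hfr : μ (⋃ i, frontier (P i)) = 0 := by
    refine measure_iUnion_null fun i => ?_
    rw [← piMap_eq hP i]
    exact null_frontier hplane (fun i j => norm_cmat P i j) i
  have hsub : Set.univ ⊆ (⋃ i, P i) ∪ (⋃ i, frontier (P i)) := by
    intro x _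
    have hcover : x ∈ ⋃ j, closure (P j) := hP.2.2.2 ▸ Set.mem_univ x
    obtain ⟨i, hi⟩ := Set.mem_iUnion.1 hcover
    by_cases h : x ∈ P i
    · exact Set.mem_union_left _ (Set.mem_iUnion.2 ⟨i, h⟩)
    · refine Set.mem_union_right _ (Set.mem_iUnion.2 ⟨i, ?_⟩)
      rw [frontier, (hP.1 i).interior_eq]
      exact ⟨hi, h⟩
  have h1 : μ Set.univ ≤ ∑ i, μ (P i) := by
    calc μ Set.univ ≤ μ ((⋃ i, P i) ∪ (⋃ i, frontier (P i))) := measure_mono hsub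
    _ ≤ μ (⋃ i, P i) + μ (⋃ i, frontier (P i)) := measure_union_le _ _
    _ = ∑ i, μ (P i) := by rw [hfr, hUnion, add_zero]
  have h2 : ∑ i, μ (P i) ≤ μ Set.univ := by
    rw [← hUnion]; exact measure_mono (Set.subset_univ _)
  exact le_antisymm h2 h1


end MeasureLemmas

lemma abs_toReal_measure_sub_le {α : Type*} [MeasurableSpace α] {μ : Measure α}
    [IsFiniteMeasure μ] (A B : Set α) :
    |(μ A).toReal - (μ B).toReal| ≤ (μ (symmDiff A B)).toReal := by
  have key : ∀ S T : Set α, μ S ≤ μ T + μ (symmDiff S T) := by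
    intro S T
    refine (measure_mono ?_).trans (measure_union_le _ _)
    intro x hx
    by_cases h : x ∈ T
    · exact Or.inl h
    · exact Or.inr (Set.mem_symmDiff.2 (Or.inl ⟨hx, h⟩))
  have hfin : ∀ S : Set α, μ S ≠ ⊤ := fun S => measure_ne_top μ S
  have h1 : (μ A).toReal ≤ (μ B).toReal + (μ (symmDiff A B)).toReal := by
    rw [← ENNReal.toReal_add (hfin B) (hfin _)]
    exact ENNReal.toReal_mono (ENNReal.add_ne_top.2 ⟨hfin B, hfin _⟩) (key A B)
  have h2 : (μ B).toReal ≤ (μ A).toReal + (μ (symmDiff A B)).toReal := by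
    rw [← ENNReal.toReal_add (hfin A) (hfin _)]
    refine ENNReal.toReal_mono (ENNReal.add_ne_top.2 ⟨hfin A, hfin _⟩) ?_
    rw [symmDiff_comm]
    exact key B A
  rw [abs_le]
  constructor <;> linarith

end PartitionAux

/-- **Compactness of `C(ℝ^d, ≤ n)`.**  With respect to the metric
`d_μ(P,P′) = Σᵢ μ(Pᵢ △ P′ᵢ)` — where `μ` is a finite measure positive on non-empty open
sets and vanishing on affine hyperplanes, as is the pushforward of the spherical measure
under the hemisphere embedding — the space of possibly non-proper convex `n`-partitions
of `ℝ^d` is (sequentially) compact: every sequence of partitions has a subsequence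
converging in `d_μ` to a partition. -/
theorem partition_space_compact
    (d n : ℕ) (μ : Measure (EuclideanSpace ℝ (Fin d))) [IsFiniteMeasure μ]
    (hpos : ∀ U : Set (EuclideanSpace ℝ (Fin d)), IsOpen U → U.Nonempty → 0 < μ U)
    (hplane : ∀ (a : EuclideanSpace ℝ (Fin d)) (b : ℝ), a ≠ 0 →
      μ {x | ⟪a, x⟫ = b} = 0)
    (P : ℕ → Fin n → Set (EuclideanSpace ℝ (Fin d)))
    (hP : ∀ k, IsConvexPartitionLE (P k)) :
    ∃ φ : ℕ → ℕ, StrictMono φ ∧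
      ∃ Q : Fin n → Set (EuclideanSpace ℝ (Fin d)), IsConvexPartitionLE Q ∧
        Tendsto (fun k => ∑ i, (μ (symmDiff (P (φ k) i) (Q i))).toReal)
          atTop (nhds 0) := by
  classical
  -- the matrices of separating functionals
  set c : ℕ → Fin n → Fin n → ℝ × Euc d := fun k => cmat (P k) with hc
  -- a compact set containing them
  set K : Set (Fin n → Fin n → ℝ × Euc d) :=
    Set.univ.pi (fun _ => Set.univ.pi fun _ => Metric.sphere (0 : ℝ × Euc d) 1) with hK
  have hKcompact : IsCompact K :=
    isCompact_univ_pi fun _ => isCompact_univ_pi fun _ => isCompact_sphere _ _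
  have hcK : ∀ k, c k ∈ K := by
    intro k
    rw [hK]
    simp only [Set.mem_univ_pi, mem_sphere_iff_norm, sub_zero]
    exact fun i j => norm_cmat (P k) i j
  obtain ⟨cL, hcLK, φ, hφ, hconv⟩ := hKcompact.tendsto_subseq hcK
  have hnormL : ∀ i j, ‖cL i j‖ = 1 := by
    rw [hK] at hcLK
    simp only [Set.mem_univ_pi, mem_sphere_iff_norm, sub_zero] at hcLK
    exact hcLK
  have hcoord : ∀ i j, Tendsto (fun k => c (φ k) i j) atTop (𝓝 (cL i j)) := by
    intro i j
    have h1 := hconv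
    rw [tendsto_pi_nhds] at h1
    have h2 := h1 i
    rw [tendsto_pi_nhds] at h2
    exact h2 j
  have hanti : ∀ i j : Fin n, i ≠ j → cL j i = -(cL i j) := by
    intro i j hij
    refine tendsto_nhds_unique (hcoord j i) ?_
    have heq : (fun k => c (φ k) j i) = fun k => -(c (φ k) i j) := by
      funext k; exact cmat_antisymm (P (φ k)) hij
    rw [heq]
    exact (hcoord i j).neg
  set Q : Fin n → Set (Euc d) := piMap cL with hQdef
  -- disjointness of the limit pieces
  have hQdisj : Pairwise (Function.onFun Disjoint Q) := by
    intro i j hij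
    refine Set.disjoint_left.2 fun x hxi hxj => ?_
    have h1 : fval (cL i j) x < 0 := hxi j (Ne.symm hij)
    have h2 : fval (cL j i) x < 0 := hxj i hij
    rw [hanti i j hij, fval_neg] at h2
    linarith
  -- a.e. nonvanishing of limit functionals
  have hTnull : μ {x : Euc d | ∃ i j : Fin n, i ≠ j ∧ fval (cL i j) x = 0} = 0 := by
    have heq : {x : Euc d | ∃ i j : Fin n, i ≠ j ∧ fval (cL i j) x = 0}
        = ⋃ i, ⋃ j, {x | i ≠ j ∧ fval (cL i j) x = 0} := by
      ext x; simp [Set.mem_iUnion]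
    rw [heq]
    refine measure_iUnion_null fun i => measure_iUnion_null fun j => ?_
    exact measure_mono_null (fun x hx => hx.2) (null_zero_set hplane (hnormL i j))
  -- convergence of each piece in measure
  have hsd : ∀ i, Tendsto (fun k => (μ (symmDiff (piMap (c (φ k)) i) (Q i))).toReal)
      atTop (𝓝 0) := by
    intro i
    have hmeasQ : MeasurableSet (Q i) := measurableSet_piMap _ _
    have hmeasK : ∀ k, MeasurableSet (symmDiff (piMap (c (φ k)) i) (Q i)) := fun k =>
      (measurableSet_piMap _ _).symmDiff hmeasQ
    set F : ℕ → Euc d → ℝ :=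
      fun k => (symmDiff (piMap (c (φ k)) i) (Q i)).indicator (fun _ => (1 : ℝ)) with hF
    have hFint : ∀ k, ∫ x, F k x ∂μ
        = (μ (symmDiff (piMap (c (φ k)) i) (Q i))).toReal := by
      intro k
      rw [hF]
      simp only []
      rw [integral_indicator_const (1 : ℝ) (hmeasK k), smul_eq_mul, mul_one]
      rfl
    have hae : ∀ᵐ x ∂μ, ¬ (∃ i j : Fin n, i ≠ j ∧ fval (cL i j) x = 0) := by
      rw [ae_iff]
      simpa using hTnull
    have hlim : ∀ᵐ x ∂μ, Tendsto (fun k => F k x) atTop (𝓝 0) := by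
      refine hae.mono fun x hx => ?_
      have hne : ∀ j, j ≠ i → fval (cL i j) x ≠ 0 := fun j hj h0 =>
        hx ⟨i, j, Ne.symm hj, h0⟩
      have hev : ∀ᶠ k in atTop, (x ∈ piMap (c (φ k)) i ↔ x ∈ Q i) := by
        by_cases hxQ : x ∈ Q i
        · have h1 : ∀ j, j ≠ i → ∀ᶠ k in atTop, fval (c (φ k) i j) x < 0 := by
            intro j hj
            have htend : Tendsto (fun k => fval (c (φ k) i j) x) atTop
                (𝓝 (fval (cL i j) x)) :=
              ((continuous_fval_p x).tendsto _).comp (hcoord i j)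
            exact htend.eventually_lt_const (hxQ j hj)
          have h2 : ∀ᶠ k in atTop, ∀ j, j ≠ i → fval (c (φ k) i j) x < 0 := by
            rw [eventually_all]
            intro j
            by_cases hj : j = i
            · exact Eventually.of_forall fun k h => absurd hj h
            · exact (h1 j hj).mono fun k hk _ => hk
          exact h2.mono fun k hk => iff_of_true (fun j hj => hk j hj) hxQ
        · have hex : ∃ j, j ≠ i ∧ 0 < fval (cL i j) x := by
            by_contra hcon
            push_neg at hcon
            apply hxQ
            intro j hj
            rcases lt_trichotomy (fval (cL i j) x) 0 with h | h | h
            · exact h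
            · exact absurd h (hne j hj)
            · exact absurd h (not_lt.2 (hcon j hj))
          obtain ⟨j, hj, hposj⟩ := hex
          have htend : Tendsto (fun k => fval (c (φ k) i j) x) atTop
              (𝓝 (fval (cL i j) x)) :=
            ((continuous_fval_p x).tendsto _).comp (hcoord i j)
          have h1 : ∀ᶠ k in atTop, 0 < fval (c (φ k) i j) x :=
            htend.eventually_const_lt hposj
          exact h1.mono fun k hk =>
            iff_of_false (fun hmem => absurd (hmem j hj) (not_lt.2 hk.le)) hxQ
      have hev0 : (fun _ : ℕ => (0 : ℝ)) =ᶠ[atTop] fun k => F k x := by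
        refine hev.mono fun k hk => ?_
        rw [hF]
        simp only [Set.indicator_apply]
        rw [if_neg]
        intro hmem
        rcases Set.mem_symmDiff.1 hmem with ⟨h1, h2⟩ | ⟨h1, h2⟩
        · exact h2 (hk.1 h1)
        · exact h2 (hk.2 h1)
      exact tendsto_const_nhds.congr' hev0
    have hint := tendsto_integral_of_dominated_convergence (μ := μ) (F := F)
      (f := fun _ => (0 : ℝ)) (fun _ => (1 : ℝ))
      (fun k => ((measurable_const.indicator (hmeasK k)).aestronglyMeasurable))
      (integrable_const 1)
      (fun k => Eventually.of_forall fun x => by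
        rw [hF]
        simp only [Set.indicator_apply]
        split_ifs <;> simp)
      hlim
    rw [integral_zero] at hint
    have hfeq : (fun k => ∫ x, F k x ∂μ)
        = fun k => (μ (symmDiff (piMap (c (φ k)) i) (Q i))).toReal := funext hFint
    rwa [hfeq] at hint
  -- convergence of measures of pieces
  have hPpi : ∀ k i, P (φ k) i = piMap (c (φ k)) i := fun k i => (piMap_eq (hP (φ k)) i).symm
  have hμlim : ∀ i, Tendsto (fun k => (μ (P (φ k) i)).toReal) atTop
      (𝓝 ((μ (Q i)).toReal)) := by
    intro i
    rw [tendsto_iff_dist_tendsto_zero]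
    refine squeeze_zero (fun k => dist_nonneg) (fun k => ?_) (hsd i)
    rw [Real.dist_eq, hPpi k i]
    exact abs_toReal_measure_sub_le _ _
  -- total mass identities
  have hsum : ∀ k, ∑ i, (μ (P (φ k) i)).toReal = (μ (Set.univ : Set (Euc d))).toReal := by
    intro k
    rw [← ENNReal.toReal_sum (fun i _ => measure_ne_top μ _), sum_measure_eq hplane (hP (φ k))]
  have hQsum_real : ∑ i, (μ (Q i)).toReal = (μ (Set.univ : Set (Euc d))).toReal := by
    have h1 : Tendsto (fun k => ∑ i, (μ (P (φ k) i)).toReal) atTop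
        (𝓝 (∑ i, (μ (Q i)).toReal)) := tendsto_finset_sum _ fun i _ => hμlim i
    have h2 : Tendsto (fun k => ∑ i, (μ (P (φ k) i)).toReal) atTop
        (𝓝 ((μ (Set.univ : Set (Euc d))).toReal)) := by
      simp only [hsum]
      exact tendsto_const_nhds
    exact tendsto_nhds_unique h1 h2
  have hQsum : ∑ i, μ (Q i) = μ Set.univ := by
    have hne : (∑ i, μ (Q i)) ≠ ⊤ :=
      (ENNReal.sum_lt_top.2 fun i _ => measure_lt_top μ _).ne
    rw [← ENNReal.toReal_eq_toReal_iff' hne (measure_ne_top μ _),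
      ENNReal.toReal_sum (fun i _ => measure_ne_top μ _)]
    exact hQsum_real
  -- the closures of the limit pieces cover
  have hmeasQ : ∀ i, MeasurableSet (Q i) := fun i => measurableSet_piMap _ _
  have hcover : (⋃ i, closure (Q i)) = Set.univ := by
    by_contra hcon
    have hU : ((⋃ i, closure (Q i))ᶜ : Set (Euc d)).Nonempty :=
      Set.nonempty_compl.2 hcon
    have hUopen : IsOpen ((⋃ i, closure (Q i))ᶜ) :=
      (isClosed_iUnion_of_finite fun i => isClosed_closure).isOpen_compl
    have hposU := hpos _ hUopen hU
    have hdisjU : Disjoint ((⋃ i, closure (Q i))ᶜ) (⋃ i, Q i) := by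
      refine Set.disjoint_left.2 fun x hx hx2 => ?_
      obtain ⟨i, hi⟩ := Set.mem_iUnion.1 hx2
      exact hx (Set.mem_iUnion.2 ⟨i, subset_closure hi⟩)
    have hQU : μ (⋃ i, Q i) = μ Set.univ := by
      rw [measure_iUnion hQdisj hmeasQ, tsum_fintype, hQsum]
    have hle : μ ((⋃ i, closure (Q i))ᶜ) + μ (⋃ i, Q i) ≤ μ Set.univ := by
      rw [← measure_union hdisjU (MeasurableSet.iUnion hmeasQ)]
      exact measure_mono (Set.subset_univ _)
    rw [hQU] at hle
    have h0 : μ ((⋃ i, closure (Q i))ᶜ) = 0 := by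
      have h1 : μ ((⋃ i, closure (Q i))ᶜ) + μ Set.univ ≤ 0 + μ Set.univ := by
        simpa using hle
      have := (ENNReal.add_le_add_iff_right (measure_ne_top μ _)).1 h1
      exact le_zero_iff.1 this
    exact absurd h0 hposU.ne'
  -- assemble
  refine ⟨φ, hφ, Q, ⟨fun i => isOpen_piMap _ _, fun i => convex_piMap _ _, hQdisj, hcover⟩, ?_⟩
  have hfun : (fun k => ∑ i, (μ (symmDiff (P (φ k) i) (Q i))).toReal)
      = fun k => ∑ i, (μ (symmDiff (piMap (c (φ k)) i) (Q i))).toReal := by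
    funext k
    exact Finset.sum_congr rfl fun i _ => by rw [hPpi k i]
  rw [hfun]
  have h := tendsto_finset_sum (Finset.univ : Finset (Fin n)) fun i _ => hsd i
  simpa using h
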